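/- Let G be a connected graph and r a vertex of G. Define the layering tree T(G,r) whose vertices are the maximal clusters with respect to r, where two clusters are adjacent if G has an edge between them. Then T(G,r) is a tree. -/

import Mathlib

open SimpleGraph

namespace Paper

variable {V : Type}

/-- `u` and `v` are connected in `G` after deleting the vertex set `B`. -/
def ConnOutside (G : SimpleGraph V) (B : Set V) (u v : V) : Prop :=
  ∃ (hu : u ∈ Bᶜ) (hv : v ∈ Bᶜ), (G.induce Bᶜ).Reachable ⟨u, hu⟩ ⟨v, hv⟩

/-- `C` is an `(a,b)`-cutset of `G`. -/
def IsSep (G : SimpleGraph V) (a b : V) (C : Set V) : Prop :=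
  a ∉ C ∧ b ∉ C ∧ ¬ ConnOutside G C a b

/-- `C` is a minimal `(a,b)`-cutset of `G`. -/
def IsMinSep (G : SimpleGraph V) (a b : V) (C : Set V) : Prop :=
  IsSep G a b C ∧ ∀ C' ⊂ C, ¬ IsSep G a b C'

/-- `S` is a cluster of the layering partition of `G` rooted at `r`, at level `k`:
a maximal set of vertices at distance exactly `k` from `r`, any two of which are
connected in `G` minus the ball of radius `k-1` around `r`. -/
def IsCluster (G : SimpleGraph V) (r : V) (k : ℕ) (S : Set V) : Prop :=
  S.Nonempty ∧ (∀ v ∈ S, G.dist r v = k) ∧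
  (∀ u ∈ S, ∀ v ∈ S, ConnOutside G {w | G.dist r w < k} u v) ∧
  ∀ S', S ⊆ S' → (∀ v ∈ S', G.dist r v = k) →
    (∀ u ∈ S', ∀ v ∈ S', ConnOutside G {w | G.dist r w < k} u v) → S' ⊆ S

/-- The parent set of a cluster `S` at level `k`: vertices at distance `k-1` from `r`
adjacent to some vertex of `S`. -/
def parentSet (G : SimpleGraph V) (r : V) (k : ℕ) (S : Set V) : Set V :=
  {v | G.dist r v = k - 1 ∧ ∃ u ∈ S, G.Adj v u}

/-- `G` has no `K_{2,3}` induced minor. -/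
def K23Free (G : SimpleGraph V) : Prop :=
  ¬ ∃ φ : Fin 2 ⊕ Fin 3 → Set V,
      (∀ w, (φ w).Nonempty) ∧ (∀ w, (G.induce (φ w)).Connected) ∧
      (Pairwise fun a b => Disjoint (φ a) (φ b)) ∧
      (∀ a b, a ≠ b →
        ((completeBipartiteGraph (Fin 2) (Fin 3)).Adj a b ↔
          ∃ u ∈ φ a, ∃ v ∈ φ b, G.Adj u v))

/-- `G` contains a theta as an induced subgraph. -/
def HasTheta (G : SimpleGraph V) : Prop :=
  ∃ (a b : V) (p₁ p₂ p₃ : G.Walk a b),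
    p₁.IsPath ∧ p₂.IsPath ∧ p₃.IsPath ∧
    2 ≤ p₁.length ∧ 2 ≤ p₂.length ∧ 2 ≤ p₃.length ∧
    (∀ v, v ∈ p₁.support → v ∈ p₂.support → v = a ∨ v = b) ∧
    (∀ v, v ∈ p₁.support → v ∈ p₃.support → v = a ∨ v = b) ∧
    (∀ v, v ∈ p₂.support → v ∈ p₃.support → v = a ∨ v = b) ∧
    ∀ u v, u ∈ p₁.support ++ p₂.support ++ p₃.support →
      v ∈ p₁.support ++ p₂.support ++ p₃.support →
      (G.Adj u v ↔ s(u, v) ∈ p₁.edges ++ p₂.edges ++ p₃.edges)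

/-- `G` contains a pyramid as an induced subgraph. -/
def HasPyramid (G : SimpleGraph V) : Prop :=
  ∃ (a b₁ b₂ b₃ : V) (p₁ : G.Walk a b₁) (p₂ : G.Walk a b₂) (p₃ : G.Walk a b₃),
    p₁.IsPath ∧ p₂.IsPath ∧ p₃.IsPath ∧
    G.Adj b₁ b₂ ∧ G.Adj b₂ b₃ ∧ G.Adj b₁ b₃ ∧
    1 ≤ p₁.length ∧ 1 ≤ p₂.length ∧ 1 ≤ p₃.length ∧
    ((2 ≤ p₁.length ∧ 2 ≤ p₂.length) ∨ (2 ≤ p₁.length ∧ 2 ≤ p₃.length) ∨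
      (2 ≤ p₂.length ∧ 2 ≤ p₃.length)) ∧
    (∀ v, v ∈ p₁.support → v ∈ p₂.support → v = a) ∧
    (∀ v, v ∈ p₁.support → v ∈ p₃.support → v = a) ∧
    (∀ v, v ∈ p₂.support → v ∈ p₃.support → v = a) ∧
    ∀ u v, u ∈ p₁.support ++ p₂.support ++ p₃.support →
      v ∈ p₁.support ++ p₂.support ++ p₃.support →
      (G.Adj u v ↔ s(u, v) ∈ p₁.edges ++ p₂.edges ++ p₃.edges ∨
        s(u, v) ∈ [s(b₁, b₂), s(b₂, b₃), s(b₁, b₃)])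

/-- The common part of the definition of an (induced) prism in `G`. -/
def PrismWitness (G : SimpleGraph V) (a₁ a₂ a₃ b₁ b₂ b₃ : V)
    (p₁ : G.Walk a₁ b₁) (p₂ : G.Walk a₂ b₂) (p₃ : G.Walk a₃ b₃) : Prop :=
  p₁.IsPath ∧ p₂.IsPath ∧ p₃.IsPath ∧
  G.Adj a₁ a₂ ∧ G.Adj a₂ a₃ ∧ G.Adj a₁ a₃ ∧
  G.Adj b₁ b₂ ∧ G.Adj b₂ b₃ ∧ G.Adj b₁ b₃ ∧
  (∀ v, v ∈ p₁.support → v ∉ p₂.support) ∧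
  (∀ v, v ∈ p₁.support → v ∉ p₃.support) ∧
  (∀ v, v ∈ p₂.support → v ∉ p₃.support) ∧
  ∀ u v, u ∈ p₁.support ++ p₂.support ++ p₃.support →
    v ∈ p₁.support ++ p₂.support ++ p₃.support →
    (G.Adj u v ↔ s(u, v) ∈ p₁.edges ++ p₂.edges ++ p₃.edges ∨
      s(u, v) ∈ [s(a₁, a₂), s(a₂, a₃), s(a₁, a₃), s(b₁, b₂), s(b₂, b₃), s(b₁, b₃)])

/-- `G` contains a prism as an induced subgraph. -/
def HasPrism (G : SimpleGraph V) : Prop :=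
  ∃ (a₁ a₂ a₃ b₁ b₂ b₃ : V) (p₁ : G.Walk a₁ b₁) (p₂ : G.Walk a₂ b₂) (p₃ : G.Walk a₃ b₃),
    PrismWitness G a₁ a₂ a₃ b₁ b₂ b₃ p₁ p₂ p₃

/-- `G` contains a long prism (at least one path of length ≥ 2) as an induced subgraph. -/
def HasLongPrism (G : SimpleGraph V) : Prop :=
  ∃ (a₁ a₂ a₃ b₁ b₂ b₃ : V) (p₁ : G.Walk a₁ b₁) (p₂ : G.Walk a₂ b₂) (p₃ : G.Walk a₃ b₃),
    PrismWitness G a₁ a₂ a₃ b₁ b₂ b₃ p₁ p₂ p₃ ∧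
    (2 ≤ p₁.length ∨ 2 ≤ p₂.length ∨ 2 ≤ p₃.length)

/-- `c` is an induced cycle (hole when length ≥ 4) of `G`. -/
def IsInducedCycle (G : SimpleGraph V) {v : V} (c : G.Walk v v) : Prop :=
  c.IsCycle ∧ ∀ x ∈ c.support, ∀ y ∈ c.support, (G.Adj x y ↔ s(x, y) ∈ c.edges)

/-- `p` is an induced path of `G`. -/
def IsInducedPath (G : SimpleGraph V) {a b : V} (p : G.Walk a b) : Prop :=
  p.IsPath ∧ ∀ u ∈ p.support, ∀ v ∈ p.support, (G.Adj u v ↔ s(u, v) ∈ p.edges)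

/-- `G` contains a wheel: a hole together with a vertex having ≥ 3 neighbours on it. -/
def HasWheel (G : SimpleGraph V) : Prop :=
  ∃ (v x : V) (c : G.Walk v v), IsInducedCycle G c ∧ 4 ≤ c.length ∧ x ∉ c.support ∧
    ∃ y₁ y₂ y₃, y₁ ≠ y₂ ∧ y₁ ≠ y₃ ∧ y₂ ≠ y₃ ∧
      y₁ ∈ c.support ∧ y₂ ∈ c.support ∧ y₃ ∈ c.support ∧
      G.Adj x y₁ ∧ G.Adj x y₂ ∧ G.Adj x y₃

/-- A sector of a wheel with rim `c` and centre `x`: a path contained in the rim whose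
end-vertices are neighbours of `x` and whose internal vertices are not. -/
def IsSector (G : SimpleGraph V) {v : V} (c : G.Walk v v) (x : V) {s t : V}
    (q : G.Walk s t) : Prop :=
  q.IsPath ∧ (∀ e ∈ q.edges, e ∈ c.edges) ∧ G.Adj x s ∧ G.Adj x t ∧
  ∀ w ∈ q.support, w ≠ s → w ≠ t → ¬ G.Adj x w

/-- `G` contains a broken wheel: a wheel with at least two sectors of length ≥ 2. -/
def HasBrokenWheel (G : SimpleGraph V) : Prop :=
  ∃ (v x : V) (c : G.Walk v v), IsInducedCycle G c ∧ 4 ≤ c.length ∧ x ∉ c.support ∧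
    (∃ y₁ y₂ y₃, y₁ ≠ y₂ ∧ y₁ ≠ y₃ ∧ y₂ ≠ y₃ ∧
      y₁ ∈ c.support ∧ y₂ ∈ c.support ∧ y₃ ∈ c.support ∧
      G.Adj x y₁ ∧ G.Adj x y₂ ∧ G.Adj x y₃) ∧
    ∃ (s₁ t₁ s₂ t₂ : V) (q₁ : G.Walk s₁ t₁) (q₂ : G.Walk s₂ t₂),
      IsSector G c x q₁ ∧ IsSector G c x q₂ ∧ 2 ≤ q₁.length ∧ 2 ≤ q₂.length ∧
      ∀ w, w ∈ q₁.support → w ∈ q₂.support → G.Adj x w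

/-- A universally signable graph: no theta, pyramid, prism, or wheel induced subgraph. -/
def UniversallySignable (G : SimpleGraph V) : Prop :=
  ¬ HasTheta G ∧ ¬ HasPyramid G ∧ ¬ HasPrism G ∧ ¬ HasWheel G

/-- `G` has tree-width at most `w`. -/
def TreewidthLe (G : SimpleGraph V) (w : ℕ) : Prop :=
  ∃ (ι : Type) (T : SimpleGraph ι) (bag : ι → Set V),
    T.IsTree ∧
    (∀ v, ∃ i, v ∈ bag i) ∧
    (∀ u v, G.Adj u v → ∃ i, u ∈ bag i ∧ v ∈ bag i) ∧
    (∀ v, (T.induce {i | v ∈ bag i}).Connected) ∧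
    (∀ i, (bag i).ncard ≤ w + 1)

/-- The strong isometric path complexity of `G` is at most `s`: for every vertex `v`,
every isometric path of `G` can be vertex-covered by at most `s` isometric paths
rooted at `v`. -/
def SipcoLe (G : SimpleGraph V) (s : ℕ) : Prop :=
  ∀ v : V, ∀ ⦃x y : V⦄ (p : G.Walk x y), p.length = G.dist x y →
    ∃ n : ℕ, n ≤ s ∧ ∃ (e : Fin n → V) (Q : ∀ i, G.Walk v (e i)),
      (∀ i, (Q i).length = G.dist v (e i)) ∧
      ∀ z ∈ p.support, ∃ i, z ∈ (Q i).support

/-- The strong isometric path complexity of `G`. -/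
noncomputable def sipco (G : SimpleGraph V) : ℕ := sInf {s | SipcoLe G s}

/-- `P` induces exactly two connected components `C₁`, `C₂` in `G`. -/
def SplitsTwo (G : SimpleGraph V) (P C₁ C₂ : Set V) : Prop :=
  C₁ ∪ C₂ = P ∧ Disjoint C₁ C₂ ∧ C₁.Nonempty ∧ C₂.Nonempty ∧
  (G.induce C₁).Connected ∧ (G.induce C₂).Connected ∧
  ∀ u ∈ C₁, ∀ v ∈ C₂, ¬ G.Adj u v

/-- The star of edges joining each vertex of `D` to `w`. -/
def starEdges (w : V) (D : Set V) : Set (Sym2 V) := {e | ∃ v ∈ D, e = s(v, w)}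

/-- Vertices of `S` with a `G`-neighbour in `C`. -/
def Dset (G : SimpleGraph V) (S C : Set V) : Set V := {u ∈ S | ∃ v ∈ C, G.Adj u v}

/-- Admissible edge sets `E` produced by Algorithm 1 when processing a cluster `S`
with parent set `P`. -/
def ClusterEdges (G : SimpleGraph V) (S P : Set V) (E : Set (Sym2 V)) : Prop :=
  ((G.induce P).Connected ∧ ∃ w ∈ P, E = starEdges w S) ∨
  ∃ C₁ C₂, SplitsTwo G P C₁ C₂ ∧ ∃ w₁ ∈ C₁, ∃ w₂ ∈ C₂,
    ((Dset G S C₁ ∩ Dset G S C₂ = ∅ ∧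
       ((¬ (∃ u ∈ Dset G S C₁, ∃ v ∈ Dset G S C₂, G.Adj u v) ∧
          E = starEdges w₁ (Dset G S C₁) ∪ starEdges w₂ (Dset G S C₂)) ∨
        (∃ u ∈ Dset G S C₁, ∃ v ∈ Dset G S C₂, G.Adj u v ∧
          E = starEdges w₁ (Dset G S C₁) ∪ starEdges w₂ (Dset G S C₂) ∪ {s(u, v)})))
     ∨
     ((Dset G S C₁ ∩ Dset G S C₂).Nonempty ∧
       ∃ u ∈ Dset G S C₁ ∩ Dset G S C₂,
         E = starEdges w₁ (Dset G S C₁) ∪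
             starEdges w₂ (Dset G S C₂ \ Dset G S C₁) ∪ {s(u, w₂)}))

/-- `H` is a possible output of the cluster-rewiring algorithm (Algorithm 1) on `(G, r)`. -/
def IsAlgoOutput (G : SimpleGraph V) (r : V) (H : SimpleGraph V) : Prop :=
  ∃ f : Set V → Set (Sym2 V),
    (∀ S k, 1 ≤ k → IsCluster G r k S → ClusterEdges G S (parentSet G r k S) (f S)) ∧
    H.edgeSet = ⋃ S ∈ {S : Set V | ∃ k, 1 ≤ k ∧ IsCluster G r k S}, f S

/-- The type of clusters of the layering partition of `G` rooted at `r`. -/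
def ClusterType (G : SimpleGraph V) (r : V) : Type := {S : Set V // ∃ k, IsCluster G r k S}

/-- The layering tree: clusters, adjacent when `G` has an edge between them. -/
def layeringTree (G : SimpleGraph V) (r : V) : SimpleGraph (ClusterType G r) :=
  SimpleGraph.fromRel (fun S T => ∃ u ∈ S.1, ∃ v ∈ T.1, G.Adj u v)

/-- `A` is a connected component of `G - C`. -/
def IsCompOf (G : SimpleGraph V) (C A : Set V) : Prop :=
  A.Nonempty ∧ Disjoint A C ∧ (G.induce A).Connected ∧
  ∀ u ∈ A, ∀ v, v ∉ A → v ∉ C → ¬ G.Adj u v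


section Aux

variable {G : SimpleGraph V} {r u v w : V} {B B' : Set V} {k j : ℕ} {S T T' : Set V}

lemma ConnOutside.rfl (hu : u ∈ Bᶜ) : ConnOutside G B u u := ⟨hu, hu, Reachable.refl _⟩

lemma ConnOutside.symm (h : ConnOutside G B u v) : ConnOutside G B v u := by
  obtain ⟨hu, hv, hr⟩ := h; exact ⟨hv, hu, hr.symm⟩

lemma ConnOutside.trans (h1 : ConnOutside G B u v) (h2 : ConnOutside G B v w) :
    ConnOutside G B u w := by
  obtain ⟨hu, hv, hr1⟩ := h1
  obtain ⟨hv', hw, hr2⟩ := h2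
  exact ⟨hu, hw, hr1.trans hr2⟩

lemma ConnOutside.of_adj (hu : u ∈ Bᶜ) (hv : v ∈ Bᶜ) (h : G.Adj u v) :
    ConnOutside G B u v :=
  ⟨hu, hv, SimpleGraph.Adj.reachable (by simpa using h :
    (G.induce Bᶜ).Adj ⟨u, hu⟩ ⟨v, hv⟩)⟩

lemma ConnOutside.mono (hBB : B' ⊆ B) (h : ConnOutside G B u v) :
    ConnOutside G B' u v := by
  obtain ⟨hu, hv, hr⟩ := h
  have hsub : (Bᶜ : Set V) ⊆ B'ᶜ := Set.compl_subset_compl.2 hBB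
  let f : G.induce Bᶜ →g G.induce B'ᶜ :=
    ⟨fun x => ⟨x.1, hsub x.2⟩, fun {a b} hab => by simpa using hab⟩
  exact ⟨hsub hu, hsub hv, hr.map f⟩

lemma mem_compl_ball (h : G.dist r u = k) : u ∈ ({x | G.dist r x < k} : Set V)ᶜ := by
  simp [Set.mem_compl_iff, Set.mem_setOf_eq, h]

/-- The canonical cluster containing `v`. -/
def clusterOf (G : SimpleGraph V) (r v : V) : Set V :=
  {w | G.dist r w = G.dist r v ∧ ConnOutside G {x | G.dist r x < G.dist r v} v w}

lemma mem_clusterOf_self (G : SimpleGraph V) (r v : V) : v ∈ clusterOf G r v :=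
  ⟨Eq.refl _, ConnOutside.rfl (mem_compl_ball (Eq.refl _))⟩

lemma isCluster_clusterOf (G : SimpleGraph V) (r v : V) :
    IsCluster G r (G.dist r v) (clusterOf G r v) := by
  refine ⟨⟨v, mem_clusterOf_self G r v⟩, fun w hw => hw.1,
    fun a ha b hb => ha.2.symm.trans hb.2, ?_⟩
  intro S' hsub hd hc w hw
  exact ⟨hd w hw, hc v (hsub (mem_clusterOf_self G r v)) w hw⟩

lemma IsCluster.level_eq (h : IsCluster G r k S) (hv : v ∈ S) : k = G.dist r v :=
  (h.2.1 v hv).symm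

/-- Two clusters at the same level joined by a `ConnOutside` witness are equal. -/
lemma cluster_union_eq {a b : V} (hS : IsCluster G r k S) (hT : IsCluster G r k T)
    (ha : a ∈ S) (hb : b ∈ T) (key : ConnOutside G {x | G.dist r x < k} a b) :
    S = T := by
  have conn : ∀ x ∈ S ∪ T, ∀ y ∈ S ∪ T, ConnOutside G {x | G.dist r x < k} x y := by
    intro x hx y hy
    have cS := hS.2.2.1
    have cT := hT.2.2.1
    rcases hx with hx | hx <;> rcases hy with hy | hy
    · exact cS x hx y hy
    · exact ((cS x hx a ha).trans key).trans (cT b hb y hy)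
    · exact ((cT x hx b hb).trans key.symm).trans (cS a ha y hy)
    · exact cT x hx y hy
  have hd : ∀ x ∈ S ∪ T, G.dist r x = k := by
    rintro x (hx | hx)
    exacts [hS.2.1 x hx, hT.2.1 x hx]
  have h1 := hS.2.2.2 (S ∪ T) Set.subset_union_left hd conn
  have h2 := hT.2.2.2 (S ∪ T) Set.subset_union_right hd conn
  exact Set.Subset.antisymm (Set.subset_union_left.trans h2)
    (Set.subset_union_right.trans h1)

/-- Two clusters sharing a vertex are equal. -/
lemma cluster_eq_of_mem (hS : IsCluster G r k S) (hT : IsCluster G r j T)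
    (hvS : v ∈ S) (hvT : v ∈ T) : S = T := by
  have hk : k = j := by rw [hS.level_eq hvS, hT.level_eq hvT]
  subst hk
  exact cluster_union_eq hS hT hvS hvT
    (ConnOutside.rfl (mem_compl_ball (hS.2.1 v hvS)))

/-- Adjacent vertices in clusters at the same level force the clusters to coincide. -/
lemma same_level_eq (hS : IsCluster G r k S) (hT : IsCluster G r k T)
    (hu : u ∈ S) (hv : v ∈ T) (h : G.Adj u v) : S = T :=
  cluster_union_eq hS hT hu hv
    (ConnOutside.of_adj (mem_compl_ball (hS.2.1 u hu)) (mem_compl_ball (hT.2.1 v hv)) h)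

lemma levels_of_edge (hG : G.Connected) (hS : IsCluster G r k S) (hT : IsCluster G r j T)
    (hu : u ∈ S) (hv : v ∈ T) (h : G.Adj u v) (hne : S ≠ T) :
    k = j + 1 ∨ j = k + 1 := by
  have hdu : G.dist r u = k := hS.2.1 u hu
  have hdv : G.dist r v = j := hT.2.1 v hv
  have huv : G.dist u v = 1 := dist_eq_one_iff_adj.mpr h
  have hvu : G.dist v u = 1 := dist_eq_one_iff_adj.mpr h.symm
  have h1 : G.dist r v ≤ G.dist r u + G.dist u v := hG.dist_triangle
  have h2 : G.dist r u ≤ G.dist r v + G.dist v u := hG.dist_triangle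
  have hkj : k ≠ j := by
    intro hkj
    subst hkj
    exact hne (same_level_eq hS hT hu hv h)
  omega

/-- Uniqueness of the parent cluster. -/
lemma parent_unique (hS : IsCluster G r (k + 1) S) (hT : IsCluster G r k T)
    (hT' : IsCluster G r k T') {u u' v v' : V}
    (hu : u ∈ S) (hv : v ∈ T) (h1 : G.Adj v u)
    (hu' : u' ∈ S) (hv' : v' ∈ T') (h2 : G.Adj v' u') : T = T' := by
  have hmu : u ∈ ({x | G.dist r x < k} : Set V)ᶜ := by
    have := hS.2.1 u hu; simp [Set.mem_compl_iff, Set.mem_setOf_eq, this]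
  have hmu' : u' ∈ ({x | G.dist r x < k} : Set V)ᶜ := by
    have := hS.2.1 u' hu'; simp [Set.mem_compl_iff, Set.mem_setOf_eq, this]
  have hmv : v ∈ ({x | G.dist r x < k} : Set V)ᶜ := mem_compl_ball (hT.2.1 v hv)
  have hmv' : v' ∈ ({x | G.dist r x < k} : Set V)ᶜ := mem_compl_ball (hT'.2.1 v' hv')
  have c1 : ConnOutside G {x | G.dist r x < k + 1} u u' := hS.2.2.1 u hu u' hu'
  have c1' : ConnOutside G {x | G.dist r x < k} u u' :=
    c1.mono (fun x hx => Nat.lt_succ_of_lt hx)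
  have key : ConnOutside G {x | G.dist r x < k} v v' :=
    ((ConnOutside.of_adj hmv hmu h1).trans c1').trans
      (ConnOutside.of_adj hmu' hmv' h2.symm)
  exact cluster_union_eq hT hT' hv hv' key

/-- Every cluster at a positive level has a parent cluster with an edge to it. -/
lemma exists_parent (hG : G.Connected) (hS : IsCluster G r (k + 1) S) :
    ∃ T, IsCluster G r k T ∧ ∃ u ∈ S, ∃ v ∈ T, G.Adj v u ∧ S ≠ T := by
  obtain ⟨u, hu⟩ := hS.1
  have hdu : G.dist r u = k + 1 := hS.2.1 u hu
  obtain ⟨p, hp⟩ := hG.exists_walk_length_eq_dist r u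
  have hlen : p.reverse.length = k + 1 := by rw [SimpleGraph.Walk.length_reverse, hp, hdu]
  have hnn : ¬ p.reverse.Nil := by
    rw [SimpleGraph.Walk.nil_iff_length_eq, hlen]; omega
  obtain ⟨v, hadj, q, hq⟩ := SimpleGraph.Walk.not_nil_iff.mp hnn
  have hlq : q.length = k := by
    have := hlen; rw [hq, SimpleGraph.Walk.length_cons] at this; omega
  have hdv : G.dist r v = k := by
    have hle : G.dist r v ≤ k := by
      have := dist_le q.reverse
      rwa [SimpleGraph.Walk.length_reverse, hlq] at this
    have hge : G.dist r u ≤ G.dist r v + G.dist v u := hG.dist_triangle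
    have : G.dist v u = 1 := dist_eq_one_iff_adj.mpr hadj.symm
    omega
  refine ⟨clusterOf G r v, by rw [← hdv]; exact isCluster_clusterOf G r v,
    u, hu, v, mem_clusterOf_self G r v, hadj.symm, ?_⟩
  intro hST
  have : v ∈ S := hST ▸ mem_clusterOf_self G r v
  have := hS.2.1 v this
  omega

end Aux

section Tree

variable {G : SimpleGraph V} {r : V}

/-- The level of a cluster. -/
noncomputable def clLvl (S : ClusterType G r) : ℕ := S.2.choose

lemma clLvl_spec (S : ClusterType G r) : IsCluster G r (clLvl S) S.1 := S.2.choose_spec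

lemma clLvl_eq {k : ℕ} {S : ClusterType G r} (h : IsCluster G r k S.1) : clLvl S = k := by
  obtain ⟨v, hv⟩ := h.1
  rw [(clLvl_spec S).level_eq hv, ← h.level_eq hv]

lemma layeringTree_adj_iff {S T : ClusterType G r} :
    (layeringTree G r).Adj S T ↔ S ≠ T ∧ ∃ u ∈ S.1, ∃ v ∈ T.1, G.Adj u v := by
  constructor
  · rintro ⟨hne, h | h⟩
    · exact ⟨hne, h⟩
    · obtain ⟨u, hu, v, hv, h⟩ := h
      exact ⟨hne, v, hv, u, hu, h.symm⟩
  · rintro ⟨hne, h⟩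
    exact ⟨hne, Or.inl h⟩

/-- The root cluster. -/
noncomputable def rootCluster (G : SimpleGraph V) (r : V) : ClusterType G r :=
  ⟨clusterOf G r r, G.dist r r, isCluster_clusterOf G r r⟩

lemma cluster_level_zero (hG : G.Connected) {S : ClusterType G r}
    (h : IsCluster G r 0 S.1) : S = rootCluster G r := by
  obtain ⟨v, hv⟩ := h.1
  have hvr : v = r := (hG.dist_eq_zero_iff.mp (h.2.1 v hv)).symm
  apply Subtype.ext
  exact cluster_eq_of_mem h (isCluster_clusterOf G r r) (hvr ▸ hv)
    (mem_clusterOf_self G r r)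

lemma reachable_root (hG : G.Connected) (n : ℕ) :
    ∀ S : ClusterType G r, clLvl S = n → (layeringTree G r).Reachable (rootCluster G r) S := by
  induction n with
  | zero =>
    intro S hS
    have h0 : IsCluster G r 0 S.1 := hS ▸ clLvl_spec S
    rw [cluster_level_zero hG h0]
  | succ n ih =>
    intro S hS
    have hcl : IsCluster G r (n + 1) S.1 := hS ▸ clLvl_spec S
    obtain ⟨T, hT, u, hu, v, hv, hadj, hne⟩ := exists_parent hG hcl
    have hTT : ∃ k, IsCluster G r k T := ⟨n, hT⟩
    set TT : ClusterType G r := ⟨T, hTT⟩ with hTTdef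
    have hlvl : clLvl TT = n := clLvl_eq hT
    have hreach : (layeringTree G r).Reachable (rootCluster G r) TT := ih TT hlvl
    have hadj2 : (layeringTree G r).Adj TT S := by
      rw [layeringTree_adj_iff]
      exact ⟨fun h => hne (congrArg Subtype.val h).symm, v, hv, u, hu, hadj⟩
    exact hreach.trans hadj2.reachable

lemma layeringTree_connected (hG : G.Connected) : (layeringTree G r).Connected := by
  rw [connected_iff]
  refine ⟨fun S T => ?_, ⟨rootCluster G r⟩⟩
  exact (reachable_root hG (clLvl S) S rfl).symm.trans (reachable_root hG (clLvl T) T rfl)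

lemma layeringTree_level_of_adj (hG : G.Connected) {S T : ClusterType G r}
    (h : (layeringTree G r).Adj S T) : clLvl S = clLvl T + 1 ∨ clLvl T = clLvl S + 1 := by
  rw [layeringTree_adj_iff] at h
  obtain ⟨hne, u, hu, v, hv, hadj⟩ := h
  exact levels_of_edge hG (clLvl_spec S) (clLvl_spec T) hu hv hadj
    (fun hval => hne (Subtype.ext hval))

lemma layeringTree_acyclic (hG : G.Connected) : (layeringTree G r).IsAcyclic := by
  classical
  intro S c hc
  obtain ⟨T, hTmem, hTmax⟩ := Finset.exists_max_image c.support.toFinset clLvl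
    ⟨S, List.mem_toFinset.mpr c.start_mem_support⟩
  rw [List.mem_toFinset] at hTmem
  have hTmax' : ∀ U ∈ c.support, clLvl U ≤ clLvl T := by
    intro U hU; exact hTmax U (List.mem_toFinset.mpr hU)
  set c' := c.rotate T hTmem with hc'def
  have hc' : c'.IsCycle := hc.rotate hTmem
  have hsub : ∀ x, x ∈ c'.support → x ∈ c.support := by
    intro x hx
    rw [SimpleGraph.Walk.support_eq_cons] at hx
    rcases List.mem_cons.mp hx with hx | hx
    · exact hx ▸ hTmem
    · exact List.mem_of_mem_tail
        (((SimpleGraph.Walk.support_rotate c T hTmem).mem_iff).mp hx)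
  have hnn : ¬ c'.Nil := by
    rw [SimpleGraph.Walk.nil_iff_length_eq]
    have := hc'.three_le_length; omega
  obtain ⟨U, h1, q, hq⟩ := SimpleGraph.Walk.not_nil_iff.mp hnn
  have hqnn : ¬ q.reverse.Nil := by
    rw [SimpleGraph.Walk.nil_iff_length_eq, SimpleGraph.Walk.length_reverse]
    have h3 := hc'.three_le_length
    rw [hq, SimpleGraph.Walk.length_cons] at h3
    omega
  obtain ⟨W, h2, q2, hq2⟩ := SimpleGraph.Walk.not_nil_iff.mp hqnn
  -- U and W are in the support of c
  have hUc : U ∈ c.support := hsub U (by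
    rw [hq, SimpleGraph.Walk.support_cons]
    exact List.mem_cons_of_mem _ q.start_mem_support)
  have hWq : W ∈ q.support := by
    have : W ∈ q.reverse.support := by
      rw [hq2, SimpleGraph.Walk.support_cons]
      exact List.mem_cons_of_mem _ q2.start_mem_support
    rwa [SimpleGraph.Walk.support_reverse, List.mem_reverse] at this
  have hWc : W ∈ c.support := hsub W (by
    rw [hq, SimpleGraph.Walk.support_cons]
    exact List.mem_cons_of_mem _ hWq)
  -- levels
  have hU1 : clLvl T = clLvl U + 1 := by
    rcases layeringTree_level_of_adj hG h1 with h | h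
    · exact h
    · have := hTmax' U hUc; omega
  have hW1 : clLvl T = clLvl W + 1 := by
    rcases layeringTree_level_of_adj hG h2 with h | h
    · exact h
    · have := hTmax' W hWc; omega
  -- extract graph edges
  obtain ⟨hneU, a, ha, b, hb, hab⟩ := layeringTree_adj_iff.mp h1
  obtain ⟨hneW, a', ha', b', hb', hab'⟩ := layeringTree_adj_iff.mp h2
  -- T.1 is a cluster at level clLvl U + 1, U.1 and W.1 at level clLvl U
  have hclT : IsCluster G r (clLvl U + 1) T.1 := hU1 ▸ clLvl_spec T
  have hclU : IsCluster G r (clLvl U) U.1 := clLvl_spec U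
  have hclW : IsCluster G r (clLvl U) W.1 := by
    have : clLvl W = clLvl U := by omega
    exact this ▸ clLvl_spec W
  have hUW : U.1 = W.1 :=
    parent_unique hclT hclU hclW ha hb hab.symm ha' hb' hab'.symm
  have hUWeq : U = W := Subtype.ext hUW
  -- the first edge of c' equals its last edge, contradicting Nodup of edges
  have hmemedge : s(T, W) ∈ q.edges := by
    have : s(T, W) ∈ q.reverse.edges := by
      rw [hq2, SimpleGraph.Walk.edges_cons]; exact List.mem_cons_self
    rwa [SimpleGraph.Walk.edges_reverse, List.mem_reverse] at this
  have hnodup : c'.edges.Nodup := hc'.edges_nodup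
  rw [hq, SimpleGraph.Walk.edges_cons] at hnodup
  exact (List.nodup_cons.mp hnodup).1 (hUWeq ▸ hmemedge)

end Tree

theorem stmt7 {V : Type} [Fintype V] (G : SimpleGraph V) (hG : G.Connected) (r : V) :
    (layeringTree G r).IsTree := by
  exact ⟨layeringTree_connected hG, layeringTree_acyclic hG⟩

end Paper
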